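/- Let T ∈ B_{A^{1/2}}(H) be A-invertible in B_{A^{1/2}}(H) with A-inverse S. Then σ_{A,app}(S) = {λ ∈ ℂ : 1/λ ∈ σ_{A,app}(T)}. -/

import Mathlib

open Filter Topology ContinuousLinearMap

set_option synthInstance.maxHeartbeats 1000000
set_option maxHeartbeats 1000000

variable {H : Type*} [NormedAddCommGroup H] [InnerProductSpace ℂ H] [CompleteSpace H]

/-- The `A`-seminorm `‖x‖_A = ⟨Ax,x⟩^{1/2}`. -/
noncomputable def anorm (A : H →L[ℂ] H) (x : H) : ℝ :=
  Real.sqrt (inner ℂ (A x) x : ℂ).re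

/-- `B_{A^{1/2}}(H)`: the `A`-bounded operators. -/
def MemBAhalf (A T : H →L[ℂ] H) : Prop :=
  ∃ d > 0, ∀ ξ : H, anorm A (T ξ) ≤ d * anorm A ξ

/-- `B_A(H)`: operators admitting an `A`-adjoint. -/
def MemBA (A T : H →L[ℂ] H) : Prop :=
  Set.range (fun x => ContinuousLinearMap.adjoint T (A x)) ⊆ Set.range A

/-- A-invertibility in `B_{A^{1/2}}(H)`. -/
def AInvertibleHalf (A T : H →L[ℂ] H) : Prop :=
  ∃ S : H →L[ℂ] H, S ≠ 0 ∧ MemBAhalf A S ∧ A ∘L T ∘L S = A ∧ A ∘L S ∘L T = A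

/-- A-invertibility in `B_A(H)`. -/
def AInvertibleBA (A T : H →L[ℂ] H) : Prop :=
  ∃ S : H →L[ℂ] H, S ≠ 0 ∧ MemBA A S ∧ A ∘L T ∘L S = A ∧ A ∘L S ∘L T = A

/-- The `A`-approximate point spectrum. -/
def sigmaAapp (A T : H →L[ℂ] H) : Set ℂ :=
  {lam | ∃ x : ℕ → H, (∀ n, anorm A (x n) = 1) ∧
    Tendsto (fun n => anorm A (T (x n) - lam • x n)) atTop (nhds 0)}

/-- The `A`-spectrum. -/
def sigmaA (A T : H →L[ℂ] H) : Set ℂ :=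
  {lam | ¬ AInvertibleHalf A (lam • (1 : H →L[ℂ] H) - T)}

/-- The `A`-numerical range. -/
def WA (A T : H →L[ℂ] H) : Set ℂ :=
  {z | ∃ x : H, anorm A x = 1 ∧ z = (inner ℂ (A (T x)) x : ℂ)}

/-- The `A`-operator seminorm, sup over the closure of the range of `A`. -/
noncomputable def AopnormCl (A T : H →L[ℂ] H) : ℝ :=
  sSup {r | ∃ ξ ∈ closure (Set.range A), anorm A ξ ≤ 1 ∧ r = anorm A (T ξ)}

/-- The `A`-operator seminorm, sup over all vectors of `A`-seminorm at most one. -/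
noncomputable def Aopnorm (A T : H →L[ℂ] H) : ℝ :=
  sSup {r | ∃ ξ : H, anorm A ξ ≤ 1 ∧ r = anorm A (T ξ)}

/-- The `A`-numerical radius. -/
noncomputable def wA (A T : H →L[ℂ] H) : ℝ :=
  sSup {r | ∃ x : H, anorm A x = 1 ∧ r = ‖(inner ℂ (A (T x)) x : ℂ)‖}

/-- The `A`-reduced minimum modulus. -/
noncomputable def gammaA (A T : H →L[ℂ] H) : ℝ :=
  sInf {r | ∃ ξ : H, (∀ y : H, anorm A (T y) = 0 → (inner ℂ (A ξ) y : ℂ) = 0) ∧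
    anorm A ξ = 1 ∧ r = anorm A (T ξ)}

/-- closure of the range of `A` as a submodule. -/
noncomputable def rangeClosure (A : H →L[ℂ] H) : Submodule ℂ H :=
  (LinearMap.range (A : H →ₗ[ℂ] H)).topologicalClosure

noncomputable instance (A : H →L[ℂ] H) : CompleteSpace (rangeClosure A) :=
  (Submodule.isClosed_topologicalClosure _).completeSpace_coe

/-- orthogonal projection onto the closure of the range of `A`, as an operator on `H`. -/
noncomputable def Pcl (A : H →L[ℂ] H) : H →L[ℂ] H :=
  (rangeClosure A).subtypeL ∘L (rangeClosure A).orthogonalProjection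



section Aux
variable {H : Type*} [NormedAddCommGroup H] [InnerProductSpace ℂ H] [CompleteSpace H]

lemma anorm_eq_sqrtA (A : H →L[ℂ] H) (hA : A.IsPositive) (x : H) :
    anorm A x = ‖CFC.sqrt A x‖ := by
  have h0 : (0 : H →L[ℂ] H) ≤ A := (ContinuousLinearMap.nonneg_iff_isPositive A).mpr hA
  have hsq : CFC.sqrt A * CFC.sqrt A = A := CFC.sqrt_mul_sqrt_self A h0
  have hsa : IsSelfAdjoint (CFC.sqrt A) := IsSelfAdjoint.of_nonneg (CFC.sqrt_nonneg A)
  have : (inner ℂ (A x) x : ℂ) = inner ℂ (CFC.sqrt A x) (CFC.sqrt A x) := by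
    conv_lhs => rw [← hsq]
    rw [ContinuousLinearMap.mul_apply]
    exact hsa.isSymmetric (CFC.sqrt A x) x
  rw [anorm, this, ← RCLike.re_to_complex, inner_self_eq_norm_sq, Real.sqrt_sq (norm_nonneg _)]

end Aux

/-- if `T ∈ B_{A^{1/2}}(H)` is `A`-invertible with `A`-inverse `S`, then
`σ_{A,app}(S) = {λ : 1/λ ∈ σ_{A,app}(T)}`. -/
theorem stmt6 (A T S : H →L[ℂ] H) (hA : A.IsPositive) (hA0 : A ≠ 0)
    (hT : MemBAhalf A T) (hS : MemBAhalf A S) (hS0 : S ≠ 0)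
    (h1 : A ∘L T ∘L S = A) (h2 : A ∘L S ∘L T = A) :
    sigmaAapp A S = {lam : ℂ | 1 / lam ∈ sigmaAapp A T} := by
  classical
  obtain ⟨dT, hdT, hTb⟩ := hT
  obtain ⟨dS, hdS, hSb⟩ := hS
  set R := CFC.sqrt A with hRdef
  have key : ∀ x : H, anorm A x = ‖R x‖ := fun x => anorm_eq_sqrtA A hA x
  have hRzero : ∀ y : H, A y = 0 → R y = 0 := by
    intro y hy
    have h1' : ‖R y‖ = 0 := by
      rw [← key, anorm, hy]; simp
    simpa using h1'
  have hTS : ∀ x : H, R (T (S x)) = R x := by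
    intro x
    have hx : A (T (S x)) = A x := by
      have := congrArg (fun (B : H →L[ℂ] H) => B x) h1
      simpa [ContinuousLinearMap.comp_apply] using this
    have h' := hRzero (T (S x) - x) (by rw [map_sub, hx, sub_self])
    rw [map_sub] at h'
    exact sub_eq_zero.mp h'
  have hST : ∀ x : H, R (S (T x)) = R x := by
    intro x
    have hx : A (S (T x)) = A x := by
      have := congrArg (fun (B : H →L[ℂ] H) => B x) h2
      simpa [ContinuousLinearMap.comp_apply] using this
    have h' := hRzero (S (T x) - x) (by rw [map_sub, hx, sub_self])
    rw [map_sub] at h'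
    exact sub_eq_zero.mp h'
  have main : ∀ (T' S' : H →L[ℂ] H) (d : ℝ), 0 < d →
      (∀ ξ : H, anorm A (T' ξ) ≤ d * anorm A ξ) →
      (∀ x : H, R (T' (S' x)) = R x) →
      ∀ lam : ℂ, lam ∈ sigmaAapp A S' → lam ≠ 0 ∧ 1 / lam ∈ sigmaAapp A T' := by
    intro T' S' d hd hb hTS' lam hmem
    obtain ⟨x, hx1, hx2⟩ := hmem
    have hx1' : ∀ n, ‖R (x n)‖ = 1 := by
      intro n; rw [← key]; exact hx1 n
    have hlam : lam ≠ 0 := by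
      rintro rfl
      simp only [zero_smul, sub_zero] at hx2
      have hb1 : ∀ n, (1 : ℝ) ≤ d * anorm A (S' (x n)) := by
        intro n
        calc (1 : ℝ) = ‖R (x n)‖ := (hx1' n).symm
          _ = ‖R (T' (S' (x n)))‖ := by rw [hTS']
          _ = anorm A (T' (S' (x n))) := (key _).symm
          _ ≤ d * anorm A (S' (x n)) := hb _
      have hlim : Tendsto (fun n => d * anorm A (S' (x n))) atTop (nhds (d * 0)) :=
        hx2.const_mul d
      have := ge_of_tendsto' hlim hb1
      rw [mul_zero] at this
      linarith
    refine ⟨hlam, x, hx1, ?_⟩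
    have hlamn : (0 : ℝ) < ‖lam‖ := norm_pos_iff.mpr hlam
    have keyineq : ∀ n, anorm A (T' (x n) - (1 / lam) • x n) ≤
        (d / ‖lam‖) * anorm A (S' (x n) - lam • x n) := by
      intro n
      have hRid : R (T' (x n) - (1 / lam) • x n)
          = (-(1 / lam)) • R (T' (S' (x n) - lam • x n)) := by
        have e1 : T' (S' (x n) - lam • x n) = T' (S' (x n)) - lam • T' (x n) := by
          rw [map_sub, map_smul]
        rw [e1, map_sub, map_sub, map_smul, map_smul, hTS', smul_sub, smul_smul]
        have h2' : -(1 / lam) * lam = -1 := by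
          field_simp
        rw [h2']
        simp [sub_eq_add_neg, add_comm]
      calc anorm A (T' (x n) - (1 / lam) • x n)
          = ‖R (T' (x n) - (1 / lam) • x n)‖ := key _
        _ = ‖(-(1 / lam)) • R (T' (S' (x n) - lam • x n))‖ := by rw [hRid]
        _ = (1 / ‖lam‖) * ‖R (T' (S' (x n) - lam • x n))‖ := by
            rw [norm_smul]; simp
        _ = (1 / ‖lam‖) * anorm A (T' (S' (x n) - lam • x n)) := by rw [key]
        _ ≤ (1 / ‖lam‖) * (d * anorm A (S' (x n) - lam • x n)) := by
            apply mul_le_mul_of_nonneg_left (hb _)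
            positivity
        _ = (d / ‖lam‖) * anorm A (S' (x n) - lam • x n) := by ring
    have hlim : Tendsto (fun n => (d / ‖lam‖) * anorm A (S' (x n) - lam • x n))
        atTop (nhds 0) := by
      simpa using hx2.const_mul (d / ‖lam‖)
    exact squeeze_zero (fun n => Real.sqrt_nonneg _) keyineq hlim
  ext lam
  simp only [Set.mem_setOf_eq]
  constructor
  · intro h
    exact (main T S dT hdT hTb hTS lam h).2
  · intro h
    have hh := main S T dS hdS hSb hST (1 / lam) h
    obtain ⟨hne, hmem⟩ := hh
    rwa [one_div_one_div] at hmem
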